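/- Let σ_k denote the k-th elementary symmetric polynomial on ℝⁿ and Γ_k = {λ ∈ ℝⁿ : σ_j(λ) > 0 for j = 1,…,k}. Then Γ_k is an open convex cone in ℝⁿ with vertex at the origin, symmetric under permutations of coordinates, and Γ_n ⊆ Γ_{n−1} ⊆ … ⊆ Γ₁. -/

import Mathlib

open Polynomial

namespace GardingAux

theorem splits_derivative (p : ℝ[X]) (h : p.Splits) :
    (derivative p).Splits := by
  by_cases hd : derivative p = 0
  · rw [hd]; exact Splits.zero
  have hdeg : p.natDegree ≠ 0 := by
    intro h0
    exact hd (by rw [eq_C_of_natDegree_eq_zero h0]; simp)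
  have h1 : Multiset.card p.roots = p.natDegree := splits_iff_card_roots.1 h
  have h2 := p.card_roots_le_derivative
  have h3 : (derivative p).natDegree ≤ p.natDegree - 1 := natDegree_derivative_le p
  have h4 := (derivative p).card_roots'
  refine splits_iff_card_roots.2 ?_
  omega

theorem splits_iterate_derivative (k : ℕ) (p : ℝ[X]) (h : p.Splits) :
    (derivative^[k] p).Splits := by
  induction k with
  | zero => exact h
  | succ n ih => rw [Function.iterate_succ_apply']; exact splits_derivative _ ih

theorem quad_disc (u : ℝ[X]) (hs : u.Splits) (hd : u.natDegree ≤ 2) :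
    4 * (u.coeff 2 * u.coeff 0) ≤ (u.coeff 1) ^ 2 := by
  by_cases h2 : u.coeff 2 = 0
  · rw [h2]; nlinarith [sq_nonneg (u.coeff 1)]
  have hd2 : u.natDegree = 2 := le_antisymm hd (le_natDegree_of_ne_zero h2)
  have hu0 : u ≠ 0 := fun h0 => h2 (by simp [h0])
  have hdeg : u.degree ≠ 0 := by
    rw [degree_eq_natDegree hu0, hd2]; exact (by norm_num)
  obtain ⟨t, ht⟩ := hs.exists_eval_eq_zero hdeg
  have heval : u.eval t = 0 := ht
  have hsum : u.eval t = u.coeff 0 + u.coeff 1 * t + u.coeff 2 * t ^ 2 := by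
    rw [eval_eq_sum_range, hd2]
    simp [Finset.sum_range_succ]
  rw [hsum] at heval
  have h5 : 4 * u.coeff 2 * (u.coeff 0 + u.coeff 1 * t + u.coeff 2 * t ^ 2) = 0 := by
    rw [heval]; ring
  nlinarith [sq_nonneg (2 * u.coeff 2 * t + u.coeff 1), h5]

end GardingAux
namespace GardingAux

theorem esymm_zero' (S : Multiset ℝ) : S.esymm 0 = 1 := by
  simp [Multiset.esymm]

theorem esymm_cons (a : ℝ) (S : Multiset ℝ) (j : ℕ) :
    (a ::ₘ S).esymm (j + 1) = S.esymm (j + 1) + a * S.esymm j := by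
  unfold Multiset.esymm
  rw [Multiset.powersetCard_cons, Multiset.map_add, Multiset.sum_add, Multiset.map_map]
  congr 1
  rw [← Multiset.sum_map_mul_left]
  congr 1
  apply Multiset.map_congr rfl
  intro t _
  simp [Multiset.prod_cons]

theorem coeff_prod_one_add (S : Multiset ℝ) (j : ℕ) :
    ((S.map fun a => 1 + C a * X).prod).coeff j = S.esymm j := by
  induction S using Multiset.induction generalizing j with
  | empty =>
    cases j with
    | zero => simp [esymm_zero']
    | succ n => simp [Multiset.esymm, Multiset.powersetCard_zero_right, coeff_one]
  | cons a S ih =>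
    rw [Multiset.map_cons, Multiset.prod_cons]
    have expand : (1 + C a * X) * (S.map fun a => 1 + C a * X).prod
        = (S.map fun a => 1 + C a * X).prod + C a * (X * (S.map fun a => 1 + C a * X).prod) := by
      ring
    rw [expand]
    cases j with
    | zero =>
      rw [coeff_add, coeff_C_mul, mul_coeff_zero]
      simp [esymm_zero', ih]
    | succ n =>
      rw [coeff_add, coeff_C_mul, coeff_X_mul, ih, ih, esymm_cons]

theorem splits_prod_one_add (S : Multiset ℝ) :
    ((S.map fun a => 1 + C a * X).prod).Splits := by
  induction S using Multiset.induction with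
  | empty => simpa using Splits.one
  | cons a S ih =>
    rw [Multiset.map_cons, Multiset.prod_cons]
    refine Splits.mul (Splits.of_natDegree_le_one ?_) ih
    calc (1 + C a * X).natDegree ≤ max (1 : ℝ[X]).natDegree (C a * X).natDegree :=
          natDegree_add_le _ _
      _ ≤ 1 := by
          simp only [natDegree_one, max_le_iff]
          exact ⟨Nat.zero_le 1, (natDegree_C_mul_le a X).trans (le_of_eq natDegree_X)⟩

theorem natDegree_prod_one_add (S : Multiset ℝ) :
    ((S.map fun a => 1 + C a * X).prod).natDegree ≤ Multiset.card S := by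
  refine (natDegree_multiset_prod_le _).trans ?_
  rw [Multiset.map_map]
  calc ((S.map fun a => ((1 + C a * X).natDegree))).sum
      ≤ ((S.map fun _ => (1:ℕ))).sum := by
        apply Multiset.sum_map_le_sum_map
        intro a _
        calc (1 + C a * X).natDegree ≤ max (1 : ℝ[X]).natDegree (C a * X).natDegree :=
              natDegree_add_le _ _
          _ ≤ 1 := by
              simp only [natDegree_one, max_le_iff]
              exact ⟨Nat.zero_le 1, (natDegree_C_mul_le a X).trans (le_of_eq natDegree_X)⟩
    _ = Multiset.card S := by simp [Multiset.map_const']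

theorem aux1 : ∀ n : ℕ, (n + 1).descFactorial n = (n + 1).factorial
  | 0 => rfl
  | n + 1 => by
    rw [Nat.succ_descFactorial_succ, aux1 n]
    rw [show n + 1 + 1 = (n+1) + 1 from rfl, Nat.factorial_succ (n+1), Nat.factorial_succ n]

theorem aux2 : ∀ n : ℕ, 2 * (n + 2).descFactorial n = (n + 2).factorial
  | 0 => rfl
  | n + 1 => by
    rw [Nat.succ_descFactorial_succ, ← Nat.mul_left_comm, aux2 n]
    rw [show n + 1 + 2 = (n+2) + 1 from rfl, Nat.factorial_succ (n+2)]


theorem core (p : ℝ[X]) (hs : p.Splits) :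
    2 * (p.natDegree : ℝ) * (p.coeff 0 * p.coeff 2) ≤ ((p.natDegree : ℝ) - 1) * (p.coeff 1) ^ 2 ∨
      p.coeff 2 = 0 := by
  by_cases h2 : p.coeff 2 = 0
  · exact Or.inr h2
  left
  have hd2 : 2 ≤ p.natDegree := le_natDegree_of_ne_zero h2
  obtain ⟨e, he⟩ : ∃ e, p.natDegree = e + 2 := ⟨p.natDegree - 2, by omega⟩
  have hp0 : p ≠ 0 := fun h0 => h2 (by simp [h0])
  have hroots : Multiset.card p.roots = p.natDegree := splits_iff_card_roots.1 hs
  have hv : ∀ j, j ≤ 2 → p.coeff j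
      = p.leadingCoeff * (-1) ^ (p.natDegree - j) * p.roots.esymm (p.natDegree - j) := by
    intro j hj
    exact coeff_eq_esymm_roots_of_splits hs (by omega)
  set T : ℝ[X] := ((p.roots.map fun a => 1 + C a * X).prod) with hT
  have hTs : T.Splits := splits_prod_one_add _
  have hTd : T.natDegree ≤ e + 2 := (natDegree_prod_one_add _).trans (by rw [hroots, he])
  set U : ℝ[X] := derivative^[e] T with hU
  have hUs : U.Splits := splits_iterate_derivative _ _ hTs
  have hUd : U.natDegree ≤ 2 := by
    refine (natDegree_iterate_derivative _ _).trans (by omega)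
  have hUc : ∀ j, U.coeff j = ((j + e).descFactorial e : ℝ) * p.roots.esymm (j + e) := by
    intro j
    rw [hU, coeff_iterate_derivative, coeff_prod_one_add, nsmul_eq_mul]
  have hq := quad_disc U hUs hUd
  rw [hUc 0, hUc 1, hUc 2] at hq
  rw [Nat.zero_add, Nat.descFactorial_self] at hq
  have h1e : (1 : ℕ) + e = e + 1 := by omega
  have h2e : (2 : ℕ) + e = e + 2 := by omega
  rw [h1e, h2e, aux1 e] at hq
  set F : ℝ := (e.factorial : ℝ) with hF
  set E0 : ℝ := p.roots.esymm e with hE0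
  set E1 : ℝ := p.roots.esymm (e + 1) with hE1
  set E2 : ℝ := p.roots.esymm (e + 2) with hE2
  have hfe : (0:ℝ) < F := by rw [hF]; positivity
  have hf1 : ((e+1).factorial : ℝ) = ((e:ℝ) + 1) * F := by
    rw [hF, Nat.factorial_succ]; push_cast; ring
  have hf2 : ((e+2).factorial : ℝ) = ((e:ℝ) + 2) * (((e:ℝ) + 1) * F) := by
    rw [hF, show e + 2 = (e+1) + 1 from rfl, Nat.factorial_succ, Nat.factorial_succ]
    push_cast; ring
  have hD : ((e + 2).descFactorial e : ℝ) = ((e+2).factorial : ℝ) / 2 := by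
    have := aux2 e
    have h' : ((2 * (e + 2).descFactorial e : ℕ) : ℝ) = ((e+2).factorial : ℝ) := by
      exact_mod_cast congrArg (Nat.cast : ℕ → ℝ) this
    push_cast at h'
    linarith
  rw [hD, hf2, hf1] at hq
  have hpos : (0:ℝ) < ((e:ℝ) + 1) * (F * F) := by positivity
  have key : 2 * ((e:ℝ) + 2) * (E2 * E0) ≤ ((e:ℝ) + 1) * E1 ^ 2 := by
    nlinarith [hq, hpos, hfe]
  have hm : (-1:ℝ) ^ (e + 2) = (-1:ℝ) ^ e := by rw [pow_add]; norm_num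
  have hm1 : (-1:ℝ) ^ (e + 1) = -((-1:ℝ) ^ e) := by rw [pow_add]; norm_num
  have hone : (-1:ℝ) ^ e * (-1:ℝ) ^ e = 1 := by
    rw [← pow_add, show e + e = 2 * e by ring, pow_mul]; norm_num
  have hc0 : p.coeff 0 = p.leadingCoeff * (-1) ^ (e + 2) * E2 := by
    rw [hv 0 (by omega), he]; norm_num; exact Or.inl rfl
  have hc1 : p.coeff 1 = p.leadingCoeff * (-1) ^ (e + 1) * E1 := by
    rw [hv 1 (by omega), he]; norm_num; exact Or.inl rfl
  have hc2 : p.coeff 2 = p.leadingCoeff * (-1) ^ e * E0 := by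
    rw [hv 2 (by omega), he]; norm_num; exact Or.inl rfl
  have hL : (0:ℝ) ≤ p.leadingCoeff ^ 2 := sq_nonneg _
  have hA : p.coeff 0 * p.coeff 2 = p.leadingCoeff ^ 2 * (E2 * E0) := by
    rw [hc0, hc2, hm]
    calc p.leadingCoeff * (-1:ℝ) ^ e * E2 * (p.leadingCoeff * (-1:ℝ) ^ e * E0)
        = ((-1:ℝ) ^ e * (-1:ℝ) ^ e) * (p.leadingCoeff ^ 2 * (E2 * E0)) := by ring
      _ = p.leadingCoeff ^ 2 * (E2 * E0) := by rw [hone, one_mul]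
  have hB : (p.coeff 1) ^ 2 = p.leadingCoeff ^ 2 * E1 ^ 2 := by
    rw [hc1, hm1]
    calc (p.leadingCoeff * -((-1:ℝ) ^ e) * E1) ^ 2
        = ((-1:ℝ) ^ e * (-1:ℝ) ^ e) * (p.leadingCoeff ^ 2 * E1 ^ 2) := by ring
      _ = p.leadingCoeff ^ 2 * E1 ^ 2 := by rw [hone, one_mul]
  rw [hA, hB, he]
  have hcast : ((e + 2 : ℕ) : ℝ) = (e:ℝ) + 2 := by push_cast; ring
  rw [hcast]
  nlinarith [mul_le_mul_of_nonneg_left key hL]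

theorem newton (M : Multiset ℝ) (r : ℕ) :
    0 < M.esymm (r+2) * M.esymm r → M.esymm (r+2) * M.esymm r ≤ M.esymm (r+1) ^ 2 := by
  intro hpos
  set W : ℝ[X] := derivative^[r] ((M.map fun a => 1 + C a * X).prod) with hW
  have hWs : W.Splits :=
    splits_iterate_derivative _ _ (splits_prod_one_add _)
  have hWc : ∀ j, W.coeff j = ((j + r).descFactorial r : ℝ) * M.esymm (j + r) := by
    intro j
    rw [hW, coeff_iterate_derivative, coeff_prod_one_add, nsmul_eq_mul]
  have h2r : (2:ℕ) + r = r + 2 := by omega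
  have h1r : (1:ℕ) + r = r + 1 := by omega
  have h0r : (0:ℕ) + r = r := by omega
  have hW2 : W.coeff 2 = ((r + 2).descFactorial r : ℝ) * M.esymm (r + 2) := by
    rw [hWc 2, h2r]
  have hW1 : W.coeff 1 = ((r + 1).factorial : ℝ) * M.esymm (r + 1) := by
    rw [hWc 1, h1r, aux1 r]
  have hW0 : W.coeff 0 = (r.factorial : ℝ) * M.esymm r := by
    rw [hWc 0, h0r, Nat.descFactorial_self]
  have hs2 : M.esymm (r + 2) ≠ 0 := fun h0 => by rw [h0, zero_mul] at hpos; exact lt_irrefl _ hpos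
  have hdF : (0:ℝ) < ((r + 2).descFactorial r : ℝ) := by
    have : (r + 2).descFactorial r ≠ 0 := by
      rw [Ne, Nat.descFactorial_eq_zero_iff_lt]; omega
    exact_mod_cast Nat.pos_of_ne_zero this
  have hW2ne : W.coeff 2 ≠ 0 := by
    rw [hW2]; exact mul_ne_zero (ne_of_gt hdF) hs2
  have hd : 2 ≤ W.natDegree := le_natDegree_of_ne_zero hW2ne
  rcases core W hWs with hcore | hbad
  · rw [hW0, hW1, hW2] at hcore
    set d : ℝ := (W.natDegree : ℝ) with hdd
    have hd2 : (2:ℝ) ≤ d := by rw [hdd]; exact_mod_cast hd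
    set F : ℝ := (r.factorial : ℝ) with hF
    have hfe : (0:ℝ) < F := by rw [hF]; positivity
    have hf1 : ((r+1).factorial : ℝ) = ((r:ℝ) + 1) * F := by
      rw [hF, Nat.factorial_succ]; push_cast; ring
    have hDf : 2 * ((r + 2).descFactorial r : ℝ) = ((r:ℝ) + 2) * (((r:ℝ) + 1) * F) := by
      have h' : ((2 * (r + 2).descFactorial r : ℕ) : ℝ) = (((r+2).factorial : ℕ) : ℝ) := by
        exact_mod_cast congrArg (Nat.cast : ℕ → ℝ) (aux2 r)
      push_cast at h'
      rw [show ((r:ℝ)+2) * (((r:ℝ)+1) * F) = (((r:ℝ)+1+1) * (((r:ℝ)+1) * F)) by ring]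
      rw [hF]
      rw [show (r:ℕ) + 2 = (r+1)+1 from rfl, Nat.factorial_succ, Nat.factorial_succ] at h'
      push_cast at h'
      linarith
    clear_value d
    clear_value W
    clear hWs hWc hW2ne hW2 hW1 hW0 hd hW hdd W
    set P : ℝ := M.esymm (r+2) * M.esymm r with hP
    set Q : ℝ := M.esymm (r+1) ^ 2 with hQ
    have hQ0 : 0 ≤ Q := by rw [hQ]; positivity
    have hF0 : F = (r.factorial : ℝ) := hF
    clear_value P Q F
    rw [hf1] at hcore
    have e1 : d * (((r:ℝ)+2) * (((r:ℝ)+1) * F)) * F * P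
        = 2 * d * (F * M.esymm r * (((r + 2).descFactorial r : ℝ) * M.esymm (r + 2))) := by
      rw [hP, ← hDf]; ring
    have e2 : (d-1) * (((r:ℝ)+1) * F)^2 * Q = (d - 1) * (((r:ℝ) + 1) * F * M.esymm (r + 1)) ^ 2 := by
      rw [hQ]; ring
    have step : d * (((r:ℝ)+2) * (((r:ℝ)+1) * F)) * F * P ≤ (d-1) * (((r:ℝ)+1) * F)^2 * Q := by
      rw [e1, e2]; exact hcore
    have hrpos : (0:ℝ) < ((r:ℝ)+1) * (F*F) := by positivity
    have h9 : (d-1) * ((r:ℝ)+1) ≤ d * ((r:ℝ)+2) := by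
      have : (0:ℝ) ≤ (r:ℝ) := Nat.cast_nonneg r
      nlinarith [hd2]
    have hcmp : (d-1) * (((r:ℝ)+1) * F)^2 ≤ d * (((r:ℝ)+2) * (((r:ℝ)+1) * F)) * F := by
      nlinarith [h9, hrpos]
    have hfin : d * (((r:ℝ)+2) * (((r:ℝ)+1) * F)) * F * P
        ≤ d * (((r:ℝ)+2) * (((r:ℝ)+1) * F)) * F * Q :=
      step.trans (mul_le_mul_of_nonneg_right hcmp hQ0)
    have hcoefpos : (0:ℝ) < d * (((r:ℝ)+2) * (((r:ℝ)+1) * F)) * F := by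
      have : (0:ℝ) ≤ (r:ℝ) := Nat.cast_nonneg r
      nlinarith [hfe, hd2]
    have := le_of_mul_le_mul_left
      (by calc d * (((r:ℝ)+2) * (((r:ℝ)+1) * F)) * F * P = (d * (((r:ℝ)+2) * (((r:ℝ)+1) * F)) * F) * P := by ring
            _ ≤ (d * (((r:ℝ)+2) * (((r:ℝ)+1) * F)) * F) * Q := by rw [show (d * (((r:ℝ)+2) * (((r:ℝ)+1) * F)) * F) * Q = d * (((r:ℝ)+2) * (((r:ℝ)+1) * F)) * F * Q by ring]; exact hfin)
      hcoefpos
    skip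
    exact this
  · exact absurd hbad hW2ne

section Es
variable {ι : Type*} [DecidableEq ι]

/-- Elementary symmetric polynomial over an index finset. -/
def es (s : Finset ι) (k : ℕ) (x : ι → ℝ) : ℝ := ∑ t ∈ s.powersetCard k, ∏ i ∈ t, x i

theorem es_eq_multiset (s : Finset ι) (k : ℕ) (x : ι → ℝ) :
    es s k x = (s.val.map x).esymm k := by
  rw [Finset.esymm_map_val]; rfl

theorem es_zero (s : Finset ι) (x : ι → ℝ) : es s 0 x = 1 := by
  simp [es]

theorem es_one (s : Finset ι) (x : ι → ℝ) : es s 1 x = ∑ i ∈ s, x i := by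
  rw [es, Finset.powersetCard_one, Finset.sum_map]
  apply Finset.sum_congr rfl
  intro i _
  simp

theorem es_erase (s : Finset ι) (x : ι → ℝ) {i : ι} (hi : i ∈ s) (k : ℕ) :
    es s (k+1) x = es (s.erase i) (k+1) x + x i * es (s.erase i) k x := by
  have hins : insert i (s.erase i) = s := Finset.insert_erase hi
  have hnot : i ∉ s.erase i := Finset.notMem_erase i s
  have hdisj : Disjoint ((s.erase i).powersetCard (k+1))
      (((s.erase i).powersetCard k).image (insert i)) := by
    rw [Finset.disjoint_left]
    intro t ht hti
    obtain ⟨u, _, rfl⟩ := Finset.mem_image.1 hti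
    exact (fun h => hnot ((Finset.mem_powersetCard.1 ht).1 h)) (Finset.mem_insert_self i u)
  have himg : ∑ t ∈ ((s.erase i).powersetCard k).image (insert i), ∏ j ∈ t, x j
      = x i * es (s.erase i) k x := by
    rw [Finset.sum_image]
    · rw [es, Finset.mul_sum]
      apply Finset.sum_congr rfl
      intro t ht
      have hit : i ∉ t := fun h => hnot ((Finset.mem_powersetCard.1 ht).1 h)
      rw [Finset.prod_insert hit]
    · intro t1 h1 t2 h2 heq
      have hi1 : i ∉ t1 := fun h => hnot ((Finset.mem_powersetCard.1 h1).1 h)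
      have hi2 : i ∉ t2 := fun h => hnot ((Finset.mem_powersetCard.1 h2).1 h)
      have := congrArg (fun u => Finset.erase u i) heq
      simpa [Finset.erase_insert hi1, Finset.erase_insert hi2] using this
  calc es s (k+1) x
      = ∑ t ∈ (insert i (s.erase i)).powersetCard (k+1), ∏ j ∈ t, x j := by rw [hins]; rfl
    _ = (∑ t ∈ (s.erase i).powersetCard (k+1), ∏ j ∈ t, x j)
        + ∑ t ∈ ((s.erase i).powersetCard k).image (insert i), ∏ j ∈ t, x j := by
          rw [Finset.powersetCard_succ_insert hnot, Finset.sum_union hdisj]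
    _ = es (s.erase i) (k+1) x + x i * es (s.erase i) k x := by rw [himg]; rfl

theorem es_deriv (s : Finset ι) (x : ι → ℝ) (k : ℕ) :
    ∑ i ∈ s, x i * es (s.erase i) k x = ((k:ℝ)+1) * es s (k+1) x := by
  have L : ∑ i ∈ s, x i * es (s.erase i) k x
      = ∑ p ∈ s.sigma (fun i => (s.erase i).powersetCard k), x p.1 * ∏ j ∈ p.2, x j := by
    rw [Finset.sum_sigma]
    apply Finset.sum_congr rfl
    intro i _
    rw [es, Finset.mul_sum]
  have R : ((k:ℝ)+1) * es s (k+1) x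
      = ∑ p ∈ (s.powersetCard (k+1)).sigma (fun u => u), x p.2 * ∏ j ∈ p.1.erase p.2, x j := by
    rw [Finset.sum_sigma, es, Finset.mul_sum]
    apply Finset.sum_congr rfl
    intro u hu
    have hcard : u.card = k+1 := (Finset.mem_powersetCard.1 hu).2
    have hval : ∀ i ∈ u, x i * ∏ j ∈ u.erase i, x j = ∏ j ∈ u, x j := fun i hi =>
      Finset.mul_prod_erase u x hi
    rw [Finset.sum_congr rfl hval, Finset.sum_const, hcard, nsmul_eq_mul]
    push_cast
    ring
  rw [L, R]
  apply Finset.sum_nbij' (i := fun p => (⟨insert p.1 p.2, p.1⟩ : Σ _ : Finset ι, ι))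
    (j := fun q => (⟨q.2, q.1.erase q.2⟩ : Σ _ : ι, Finset ι))
  · intro a ha
    rw [Finset.mem_sigma] at ha
    obtain ⟨ha1, ha2⟩ := ha
    rw [Finset.mem_powersetCard] at ha2
    obtain ⟨hsub, hcard⟩ := ha2
    have hnot : a.1 ∉ a.2 := fun h => (Finset.notMem_erase a.1 s) (hsub h)
    rw [Finset.mem_sigma]
    constructor
    · rw [Finset.mem_powersetCard]
      constructor
      · intro j hj
        rcases Finset.mem_insert.1 hj with rfl | hj2
        · exact ha1
        · exact (Finset.erase_subset a.1 s) (hsub hj2)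
      · rw [Finset.card_insert_of_notMem hnot, hcard]
    · exact Finset.mem_insert_self _ _
  · intro b hb
    rw [Finset.mem_sigma] at hb
    obtain ⟨hb1, hb2⟩ := hb
    rw [Finset.mem_powersetCard] at hb1
    obtain ⟨hsub, hcard⟩ := hb1
    rw [Finset.mem_sigma]
    constructor
    · exact hsub hb2
    · rw [Finset.mem_powersetCard]
      constructor
      · exact fun j hj => by
          rw [Finset.mem_erase] at hj ⊢
          exact ⟨hj.1, hsub hj.2⟩
      · rw [Finset.card_erase_of_mem hb2, hcard]
        rfl
  · intro a ha
    rw [Finset.mem_sigma] at ha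
    obtain ⟨_, ha2⟩ := ha
    rw [Finset.mem_powersetCard] at ha2
    have hnot : a.1 ∉ a.2 := fun h => (Finset.notMem_erase a.1 s) (ha2.1 h)
    have : (insert a.1 a.2).erase a.1 = a.2 := Finset.erase_insert hnot
    exact Sigma.ext rfl (heq_of_eq this)
  · intro b hb
    rw [Finset.mem_sigma] at hb
    have : insert b.2 (b.1.erase b.2) = b.1 := Finset.insert_erase hb.2
    exact Sigma.ext this (by rw [this])
  · intro a ha
    rw [Finset.mem_sigma] at ha
    obtain ⟨_, ha2⟩ := ha
    rw [Finset.mem_powersetCard] at ha2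
    have hnot : a.1 ∉ a.2 := fun h => (Finset.notMem_erase a.1 s) (ha2.1 h)
    rw [Finset.erase_insert hnot]


theorem newton_es (s : Finset ι) (x : ι → ℝ) (r : ℕ)
    (h : 0 < es s (r+2) x * es s r x) :
    es s (r+2) x * es s r x ≤ es s (r+1) x ^ 2 := by
  have h' : 0 < (s.val.map x).esymm (r+2) * (s.val.map x).esymm r := by
    rwa [← es_eq_multiset, ← es_eq_multiset]
  have := newton (s.val.map x) r h'
  rwa [← es_eq_multiset, ← es_eq_multiset, ← es_eq_multiset] at this

theorem es_smul (s : Finset ι) (j : ℕ) (x : ι → ℝ) (t : ℝ) :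
    es s j (t • x) = t ^ j * es s j x := by
  rw [es, es, Finset.mul_sum]
  apply Finset.sum_congr rfl
  intro u hu
  have hcard : u.card = j := (Finset.mem_powersetCard.1 hu).2
  rw [← hcard]
  calc ∏ i ∈ u, (t • x) i = ∏ i ∈ u, (t * x i) := rfl
    _ = (∏ _i ∈ u, t) * ∏ i ∈ u, x i := Finset.prod_mul_distrib
    _ = t ^ u.card * ∏ i ∈ u, x i := by rw [Finset.prod_const]

/-- membership in the Γ_k cone over an index set -/
def GammaP (s : Finset ι) (k : ℕ) (x : ι → ℝ) : Prop := ∀ j, 1 ≤ j → j ≤ k → 0 < es s j x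

theorem gammaP_mono {s : Finset ι} {k k' : ℕ} {x : ι → ℝ} (h : k' ≤ k)
    (hx : GammaP s k x) : GammaP s k' x := fun j h1 h2 => hx j h1 (h2.trans h)

theorem es_pos_top {s : Finset ι} {m : ℕ} {x : ι → ℝ} (h : GammaP s m x) : 0 < es s m x := by
  cases m with
  | zero => rw [es_zero]; norm_num
  | succ p => exact h _ (by omega) (le_refl _)

theorem titu {a b p q : ℝ} (hp : 0 < p) (hq : 0 < q) :
    (a + b) ^ 2 / (p + q) ≤ a ^ 2 / p + b ^ 2 / q := by
  rw [div_add_div _ _ (ne_of_gt hp) (ne_of_gt hq), div_le_div_iff₀ (by positivity) (by positivity)]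
  nlinarith [sq_nonneg (a * q - b * p), hp.le, hq.le, mul_pos hp hq]

theorem rep (s : Finset ι) (v : ι → ℝ) (m : ℕ) (hB : es s (m+1) v ≠ 0) :
    ((m:ℝ)+2) * (es s (m+2) v / es s (m+1) v)
      = (∑ i ∈ s, v i) - ∑ i ∈ s, (v i)^2 * es (s.erase i) m v / es s (m+1) v := by
  have h3 := es_deriv s v (m+1)
  have h4 : ∑ i ∈ s, v i * es (s.erase i) (m+1) v
      = (∑ i ∈ s, v i) * es s (m+1) v - ∑ i ∈ s, (v i)^2 * es (s.erase i) m v := by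
    rw [Finset.sum_mul, ← Finset.sum_sub_distrib]
    apply Finset.sum_congr rfl
    intro i hi
    linear_combination (-(v i)) * (es_erase s v hi m)
  have keyEq : ((m:ℝ)+2) * es s (m+2) v
      = (∑ i ∈ s, v i) * es s (m+1) v - ∑ i ∈ s, (v i)^2 * es (s.erase i) m v := by
    rw [← h4, h3]; push_cast; ring
  rw [← mul_div_assoc, keyEq, sub_div, Finset.sum_div]
  congr 1
  exact mul_div_cancel_right₀ _ hB

theorem main (k : ℕ) :
    (∀ (s : Finset ι) (x y : ι → ℝ), GammaP s k x → GammaP s k y →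
      es s (k+1) x / es s k x + es s (k+1) y / es s k y ≤
        es s (k+1) (x + y) / es s k (x + y)) ∧
    (∀ (s : Finset ι) (x : ι → ℝ) (i : ι), i ∈ s → GammaP s k x →
      GammaP (s.erase i) (k-1) x) ∧
    (∀ (s : Finset ι) (x y : ι → ℝ), GammaP s k x → GammaP s k y →
      GammaP s k (x + y)) := by
  induction k using Nat.strong_induction_on with
  | _ k IH =>
  match k with
  | 0 =>
    refine ⟨?_, ?_, ?_⟩
    · intro s x y _ _
      rw [es_zero, es_zero, es_zero, div_one, div_one, div_one, es_one, es_one, es_one]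
      rw [← Finset.sum_add_distrib]
      apply le_of_eq
      apply Finset.sum_congr rfl
      intro i _
      rfl
    · intro s x i _ _ j h1 h2
      omega
    · intro s x y _ _ j h1 h2
      omega
  | m + 1 =>
  obtain ⟨Sm, Dm, _⟩ := IH m (by omega)
  -- D (m+1)
  have Dk : ∀ (s : Finset ι) (x : ι → ℝ) (i : ι), i ∈ s → GammaP s (m+1) x →
      GammaP (s.erase i) m x := by
    intro s x i hi hx j hj1 hj2
    rcases Nat.lt_or_ge j m with hjm | hjm
    · -- j ≤ m-1 : use Dm
      have hDm := Dm s x i hi (gammaP_mono (by omega) hx)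
      exact hDm j hj1 (by omega)
    · -- j = m, and m ≥ 1
      have hjeq : j = m := le_antisymm hj2 hjm
      subst hjeq
      obtain ⟨r, hr⟩ : ∃ r, j = r + 1 := ⟨j - 1, by omega⟩
      subst hr
      -- target: 0 < es (s.erase i) (r+1) x, hypothesis : GammaP s (r+2) x
      have hAr : 0 < es (s.erase i) r x := by
        have hG : GammaP (s.erase i) r x := by
          have hDm := Dm s x i hi (gammaP_mono (by omega) hx)
          rwa [show r + 1 - 1 = r from by omega] at hDm
        exact es_pos_top hG
      have hS1 : 0 < es s (r+1) x := hx _ (by omega) (by omega)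
      have hS2 : 0 < es s (r+2) x := hx _ (by omega) (le_refl _)
      by_contra hneg
      push_neg at hneg
      have e1 := es_erase s x hi r
      have e2 := es_erase s x hi (r+1)
      have hS1' : 0 < es (s.erase i) (r+1) x + x i * es (s.erase i) r x := by rw [← e1]; exact hS1
      have hS2' : 0 < es (s.erase i) (r+2) x + x i * es (s.erase i) (r+1) x := by rw [← e2]; exact hS2
      have ha : 0 < x i := by nlinarith [hS1', hneg, hAr]
      have hA2 : 0 < es (s.erase i) (r+2) x := by nlinarith [hS2', ha, hneg]
      have hN := newton_es (s.erase i) x r (mul_pos hA2 hAr)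
      nlinarith [mul_nonneg hS1'.le (neg_nonneg.2 hneg), mul_pos hS2' hAr, hN]
  -- C (m+1)
  have Ck : ∀ (s : Finset ι) (x y : ι → ℝ), GammaP s (m+1) x → GammaP s (m+1) y →
      GammaP s (m+1) (x + y) := by
    intro s x y hx hy
    have key : ∀ j, j ≤ m + 1 → 1 ≤ j → 0 < es s j (x + y) := by
      intro j
      induction j with
      | zero => omega
      | succ n ihn =>
        intro hle _
        have hprev : 0 < es s n (x + y) := by
          cases n with
          | zero => rw [es_zero]; norm_num
          | succ p => exact ihn (by omega) (by omega)
        have hSn := (IH n (by omega)).1 s x y (gammaP_mono (by omega) hx)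
          (gammaP_mono (by omega) hy)
        have hx1 : 0 < es s (n+1) x := hx _ (by omega) (by omega)
        have hy1 : 0 < es s (n+1) y := hy _ (by omega) (by omega)
        have hx0 : 0 < es s n x := es_pos_top (gammaP_mono (by omega) hx)
        have hy0 : 0 < es s n y := es_pos_top (gammaP_mono (by omega) hy)
        have hsum : 0 < es s (n+1) x / es s n x + es s (n+1) y / es s n y := by positivity
        have hq : 0 < es s (n+1) (x+y) / es s n (x+y) := lt_of_lt_of_le hsum hSn
        have := mul_pos hq hprev
        rw [div_mul_cancel₀ _ (ne_of_gt hprev)] at this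
        exact this
    intro j h1 h2
    exact key j h2 h1
  refine ⟨?_, ?_, ?_⟩
  · -- S (m+1)
    intro s x y hx hy
    set z : ι → ℝ := x + y with hz
    have hzg : GammaP s (m+1) z := Ck s x y hx hy
    have hBx : 0 < es s (m+1) x := hx _ (by omega) (le_refl _)
    have hBy : 0 < es s (m+1) y := hy _ (by omega) (le_refl _)
    have hBz : 0 < es s (m+1) z := hzg _ (by omega) (le_refl _)
    have repx := rep s x m (ne_of_gt hBx)
    have repy := rep s y m (ne_of_gt hBy)
    have repz := rep s z m (ne_of_gt hBz)
    have hsum1 : (∑ i ∈ s, z i) = (∑ i ∈ s, x i) + (∑ i ∈ s, y i) := by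
      rw [← Finset.sum_add_distrib]
      apply Finset.sum_congr rfl
      intro i _
      rfl
    -- termwise inequality
    have hterm : ∀ i ∈ s,
        (z i)^2 * es (s.erase i) m z / es s (m+1) z ≤
        (x i)^2 * es (s.erase i) m x / es s (m+1) x +
        (y i)^2 * es (s.erase i) m y / es s (m+1) y := by
      intro i hi
      have hDx := Dk s x i hi hx
      have hDy := Dk s y i hi hy
      have hDz := Dk s z i hi hzg
      have hAx : 0 < es (s.erase i) m x := es_pos_top hDx
      have hAy : 0 < es (s.erase i) m y := es_pos_top hDy
      have hAz : 0 < es (s.erase i) m z := es_pos_top hDz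
      -- ratio identity
      have ratio : ∀ v : ι → ℝ, es (s.erase i) m v ≠ 0 →
          es s (m+1) v / es (s.erase i) m v = v i + es (s.erase i) (m+1) v / es (s.erase i) m v := by
        intro v hv
        rw [es_erase s v hi m, add_div, mul_div_cancel_right₀ _ hv, add_comm]
      have hSm := Sm (s.erase i) x y hDx hDy
      rw [← hz] at hSm
      have hkey : es s (m+1) x / es (s.erase i) m x + es s (m+1) y / es (s.erase i) m y
          ≤ es s (m+1) z / es (s.erase i) m z := by
        rw [ratio x (ne_of_gt hAx), ratio y (ne_of_gt hAy), ratio z (ne_of_gt hAz)]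
        have hzi : z i = x i + y i := rfl
        rw [hzi]
        linarith [hSm]
      have hPx : 0 < es s (m+1) x / es (s.erase i) m x := div_pos hBx hAx
      have hPy : 0 < es s (m+1) y / es (s.erase i) m y := div_pos hBy hAy
      have hPz : 0 < es s (m+1) z / es (s.erase i) m z := div_pos hBz hAz
      have step1 : (z i)^2 * es (s.erase i) m z / es s (m+1) z
          = (z i)^2 / (es s (m+1) z / es (s.erase i) m z) := by
        rw [div_div_eq_mul_div]
      have step2 : (z i)^2 / (es s (m+1) z / es (s.erase i) m z)
          ≤ (z i)^2 / (es s (m+1) x / es (s.erase i) m x + es s (m+1) y / es (s.erase i) m y) := by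
        apply div_le_div_of_nonneg_left (sq_nonneg _) (by positivity) hkey
      have step3 : (z i)^2 / (es s (m+1) x / es (s.erase i) m x + es s (m+1) y / es (s.erase i) m y)
          ≤ (x i)^2 / (es s (m+1) x / es (s.erase i) m x) + (y i)^2 / (es s (m+1) y / es (s.erase i) m y) := by
        have hzi : z i = x i + y i := rfl
        rw [hzi]
        exact titu hPx hPy
      have step4 : (x i)^2 / (es s (m+1) x / es (s.erase i) m x) = (x i)^2 * es (s.erase i) m x / es s (m+1) x := by
        rw [div_div_eq_mul_div]
      have step5 : (y i)^2 / (es s (m+1) y / es (s.erase i) m y) = (y i)^2 * es (s.erase i) m y / es s (m+1) y := by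
        rw [div_div_eq_mul_div]
      calc (z i)^2 * es (s.erase i) m z / es s (m+1) z
          ≤ (z i)^2 / (es s (m+1) x / es (s.erase i) m x + es s (m+1) y / es (s.erase i) m y) := by
            rw [step1]; exact step2
        _ ≤ (x i)^2 / (es s (m+1) x / es (s.erase i) m x) + (y i)^2 / (es s (m+1) y / es (s.erase i) m y) := step3
        _ = (x i)^2 * es (s.erase i) m x / es s (m+1) x + (y i)^2 * es (s.erase i) m y / es s (m+1) y := by
            rw [step4, step5]
    have hsumterm : ∑ i ∈ s, (z i)^2 * es (s.erase i) m z / es s (m+1) z ≤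
        (∑ i ∈ s, (x i)^2 * es (s.erase i) m x / es s (m+1) x) +
        (∑ i ∈ s, (y i)^2 * es (s.erase i) m y / es s (m+1) y) := by
      rw [← Finset.sum_add_distrib]
      exact Finset.sum_le_sum hterm
    have hm2 : (0:ℝ) < (m:ℝ) + 2 := by positivity
    have final : ((m:ℝ)+2) * (es s (m+2) x / es s (m+1) x) + ((m:ℝ)+2) * (es s (m+2) y / es s (m+1) y)
        ≤ ((m:ℝ)+2) * (es s (m+2) z / es s (m+1) z) := by
      rw [repx, repy, repz, hsum1]
      linarith [hsumterm]
    nlinarith [final, hm2]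
  · exact Dk
  · exact Ck


theorem es_comp_perm {n : ℕ} (σ : Equiv.Perm (Fin n)) (j : ℕ) (x : Fin n → ℝ) :
    es Finset.univ j (x ∘ σ) = es Finset.univ j x := by
  rw [es_eq_multiset, es_eq_multiset]
  congr 1
  have h1 : (Finset.univ.val.map (x ∘ σ)) = (Finset.univ.val.map (σ : Fin n → Fin n)).map x := by
    rw [Multiset.map_map]
  have h2 : Finset.univ.val.map (σ : Fin n → Fin n) = Finset.univ.val := by
    conv_rhs => rw [← Finset.map_univ_equiv σ]
    rw [Finset.map_val]
    simp [Equiv.coe_toEmbedding]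
  rw [h1, h2]

end Es
end GardingAux

/-- The `k`-th elementary symmetric polynomial of `λ ∈ ℝⁿ`. -/
def esymm (n k : ℕ) (lam : Fin n → ℝ) : ℝ :=
  ∑ s ∈ Finset.univ.powersetCard k, ∏ i ∈ s, lam i

/-- The Gårding cone `Γ_k = {λ ∈ ℝⁿ : σ_j(λ) > 0, j = 1,…,k}`. -/
def Gamma (n k : ℕ) : Set (Fin n → ℝ) :=
  {lam | ∀ j, 1 ≤ j → j ≤ k → 0 < esymm n j lam}

theorem esymm_eq_es (n j : ℕ) (lam : Fin n → ℝ) :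
    esymm n j lam = GardingAux.es Finset.univ j lam := rfl

theorem continuous_esymm (n j : ℕ) : Continuous (esymm n j) := by
  unfold esymm
  exact continuous_finset_sum _ fun t _ => continuous_finset_prod _ fun i _ => continuous_apply i

/-- `Γ_k` is an open convex cone with vertex at the origin, symmetric under
permutations of the coordinates, and `Γ_n ⊆ Γ_{n−1} ⊆ … ⊆ Γ₁`. -/
theorem stmt_9 (n k : ℕ) :
    (∀ lam ∈ Gamma n k, ∀ t : ℝ, 0 < t → t • lam ∈ Gamma n k) ∧
    IsOpen (Gamma n k) ∧
    Convex ℝ (Gamma n k) ∧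
    (∀ σ : Equiv.Perm (Fin n), ∀ lam ∈ Gamma n k, lam ∘ σ ∈ Gamma n k) ∧
    (∀ j : ℕ, Gamma n (j + 1) ⊆ Gamma n j) := by
  have hcone : ∀ lam ∈ Gamma n k, ∀ t : ℝ, 0 < t → t • lam ∈ Gamma n k := by
    intro lam hlam t ht j h1 h2
    have : esymm n j (t • lam) = t ^ j * esymm n j lam := by
      rw [esymm_eq_es, esymm_eq_es, GardingAux.es_smul]
    rw [this]
    exact mul_pos (pow_pos ht j) (hlam j h1 h2)
  refine ⟨hcone, ?_, ?_, ?_, ?_⟩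
  · -- openness
    have hG : Gamma n k = ⋂ j ∈ Finset.Icc 1 k, {lam : Fin n → ℝ | 0 < esymm n j lam} := by
      ext lam
      simp only [Gamma, Set.mem_setOf_eq, Set.mem_iInter, Finset.mem_Icc]
      exact ⟨fun h j hj => h j hj.1 hj.2, fun h j h1 h2 => h j ⟨h1, h2⟩⟩
    rw [hG]
    apply isOpen_biInter_finset
    intro j _
    exact isOpen_lt continuous_const (continuous_esymm n j)
  · -- convexity
    intro x hx y hy a b ha hb hab
    rcases eq_or_lt_of_le ha with h0 | ha'
    · have hb1 : b = 1 := by linarith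
      rw [← h0, hb1, zero_smul, one_smul, zero_add]
      exact hy
    rcases eq_or_lt_of_le hb with h0b | hb'
    · have ha1 : a = 1 := by linarith
      rw [← h0b, ha1, zero_smul, one_smul, add_zero]
      exact hx
    have hax : a • x ∈ Gamma n k := hcone x hx a ha'
    have hby : b • y ∈ Gamma n k := hcone y hy b hb'
    have hC := (GardingAux.main (ι := Fin n) k).2.2 Finset.univ (a • x) (b • y)
      (fun j h1 h2 => by rw [← esymm_eq_es]; exact hax j h1 h2)
      (fun j h1 h2 => by rw [← esymm_eq_es]; exact hby j h1 h2)
    intro j h1 h2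
    rw [esymm_eq_es]
    exact hC j h1 h2
  · -- permutation symmetry
    intro σ lam hlam j h1 h2
    rw [esymm_eq_es, GardingAux.es_comp_perm]
    exact hlam j h1 h2
  · -- nesting
    intro j lam h j' h1 h2
    exact h j' h1 (by omega)
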